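/- Let G⊙H be k'-metric dimensional where G is connected of order n ≥ 2 and all graphs in H are connected and non-trivial. Then for every k ∈ {1,...,k'}: Σ_{i=1}^n dim_k(H_i) ≤ dim_k(G⊙H) ≤ Σ_{i=1}^n |V(H_i)|. -/

import Mathlib

open SimpleGraph

/-- `S` is a `k`-metric generator for `G`: every pair of distinct vertices is
distinguished (has different distances) by at least `k` vertices of `S`. -/
def kMetricGen {V : Type*} [Fintype V] (G : SimpleGraph V) (k : ℕ) (S : Set V) : Prop :=
  ∀ u v : V, u ≠ v → ∃ T : Finset V, ↑T ⊆ S ∧ k ≤ T.card ∧ ∀ w ∈ T, G.dist u w ≠ G.dist v w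

/-- `G` is `k`-metric dimensional: `k` is the largest integer admitting a `k`-metric generator. -/
def kMetricDimensional {V : Type*} [Fintype V] (G : SimpleGraph V) (k : ℕ) : Prop :=
  (∃ S : Set V, kMetricGen G k S) ∧ ∀ k' : ℕ, (∃ S : Set V, kMetricGen G k' S) → k' ≤ k

/-- The `k`-metric dimension of `G`. -/
noncomputable def kMetricDim {V : Type*} [Fintype V] (G : SimpleGraph V) (k : ℕ) : ℕ :=
  sInf {m | ∃ S : Finset V, kMetricGen G k ↑S ∧ S.card = m}

/-- A `k`-metric basis: a minimum-cardinality `k`-metric generator. -/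
def kMetricBasis {V : Type*} [Fintype V] (G : SimpleGraph V) (k : ℕ) (B : Finset V) : Prop :=
  kMetricGen G k ↑B ∧ ∀ T : Finset V, kMetricGen G k ↑T → B.card ≤ T.card

/-- Auxiliary relation for the corona product. -/
def coronaRel {V : Type*} {W : V → Type*} (G : SimpleGraph V) (H : ∀ v, SimpleGraph (W v)) :
    (V ⊕ (Σ v, W v)) → (V ⊕ (Σ v, W v)) → Prop
  | Sum.inl a, Sum.inl b => G.Adj a b
  | Sum.inl a, Sum.inr b => a = b.1
  | Sum.inr a, Sum.inr b => ∃ h : a.1 = b.1, (H b.1).Adj (h ▸ a.2) b.2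
  | _, _ => False

/-- The corona product `G ⊙ 𝓗`: one copy of `G`, and each vertex `v` of `G` joined by an
edge to every vertex of its own copy of `H v`. -/
def corona {V : Type*} {W : V → Type*} (G : SimpleGraph V) (H : ∀ v, SimpleGraph (W v)) :
    SimpleGraph (V ⊕ (Σ v, W v)) :=
  SimpleGraph.fromRel (coronaRel G H)

/-- The join `K₁ + H`: a new vertex (`none`) adjacent to every vertex of `H`. -/
def K1join {U : Type*} (H : SimpleGraph U) : SimpleGraph (Option U) :=
  SimpleGraph.fromRel (fun x y => match x, y with
    | none, some _ => True
    | some a, some b => H.Adj a b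
    | _, _ => False)

/-- `𝒞(H) = min_{x ≠ y} |(N(x) △ N(y)) ∪ {x,y}|`. -/
noncomputable def CC {U : Type*} (H : SimpleGraph U) : ℕ :=
  sInf {m | ∃ x y : U, x ≠ y ∧
    (symmDiff (H.neighborSet x) (H.neighborSet y) ∪ {x, y}).ncard = m}

namespace CoronaAux

open Sum SimpleGraph

variable {V : Type*} {W : V → Type*} (G : SimpleGraph V) (H : ∀ v, SimpleGraph (W v))

/-- projection to base -/
abbrev p : (V ⊕ (Σ v, W v)) → V := Sum.elim id Sigma.fst

lemma corona_adj {x y : V ⊕ (Σ v, W v)} :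
    (corona G H).Adj x y ↔ x ≠ y ∧ (coronaRel G H x y ∨ coronaRel G H y x) :=
  SimpleGraph.fromRel_adj _ _ _

lemma adj_inl_inr (b : V) (w : W b) : (corona G H).Adj (inl b) (inr ⟨b, w⟩) :=
  (corona_adj G H).mpr ⟨by simp, Or.inl rfl⟩

def homInl : G →g corona G H :=
  ⟨Sum.inl, fun {a b} h => (corona_adj G H).mpr ⟨by simpa using h.ne, Or.inl h⟩⟩

lemma proj_eq_of_adj_inr {x : V ⊕ (Σ v, W v)} {t : Σ v, W v}
    (h : (corona G H).Adj x (inr t)) : p x = t.1 := by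
  rw [corona_adj] at h
  cases x with
  | inl a =>
    obtain ⟨-, h | h⟩ := h
    · exact h
    · exact h.elim
  | inr s =>
    obtain ⟨-, h | h⟩ := h
    · obtain ⟨hh, -⟩ := h; exact hh
    · obtain ⟨hh, -⟩ := h; exact hh.symm

lemma proj_adj {x y : V ⊕ (Σ v, W v)} (h : (corona G H).Adj x y) :
    p x = p y ∨ G.Adj (p x) (p y) := by
  rw [corona_adj] at h
  cases x with
  | inl a =>
    cases y with
    | inl b =>
      obtain ⟨-, h | h⟩ := h
      · exact Or.inr h
      · exact Or.inr h.symm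
    | inr t =>
      obtain ⟨-, h | h⟩ := h
      · exact Or.inl h
      · exact h.elim
  | inr s =>
    cases y with
    | inl b =>
      obtain ⟨-, h | h⟩ := h
      · exact h.elim
      · exact Or.inl h.symm
    | inr t =>
      obtain ⟨-, h | h⟩ := h
      · obtain ⟨hh, -⟩ := h; exact Or.inl hh
      · obtain ⟨hh, -⟩ := h; exact Or.inl hh.symm

lemma adj_inr_same {a : V} {x y : W a} :
    (corona G H).Adj (inr ⟨a, x⟩) (inr ⟨a, y⟩) ↔ (H a).Adj x y := by
  rw [corona_adj]
  constructor
  · rintro ⟨hne, h | h⟩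
    · obtain ⟨hh, hadj⟩ := h; exact hadj
    · obtain ⟨hh, hadj⟩ := h; exact hadj.symm
  · intro hadj
    exact ⟨by simpa using hadj.ne, Or.inl ⟨rfl, hadj⟩⟩

lemma corona_connected (hG : G.Connected) : (corona G H).Connected := by
  have h1 : ∀ z : V ⊕ (Σ v, W v), (corona G H).Reachable z (inl (p z)) := by
    intro z
    cases z with
    | inl a => exact Reachable.refl _
    | inr s => exact ((adj_inl_inr G H s.1 s.2).symm).reachable
  obtain ⟨v0⟩ := hG.nonempty
  have : Nonempty (V ⊕ (Σ v, W v)) := ⟨inl v0⟩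
  exact SimpleGraph.Connected.mk (fun x y =>
    (h1 x).trans (Reachable.trans ((hG.preconnected (p x) (p y)).map (homInl G H)) (h1 y).symm))

lemma dist_proj (hG : G.Connected) {x y : V ⊕ (Σ v, W v)} (q : (corona G H).Walk x y) :
    G.dist (p x) (p y) ≤ q.length := by
  induction q with
  | nil => simp
  | @cons u₁ u₂ u₃ h q ih =>
    rw [Walk.length_cons]
    rcases proj_adj G H h with he | ha
    · rw [he]; omega
    · have h1 : G.dist (p u₁) (p u₂) ≤ 1 := by
        simpa using SimpleGraph.dist_le (Walk.cons ha Walk.nil)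
      have h2 := hG.dist_triangle (u := p u₁) (v := p u₂) (w := p u₃)
      omega

lemma len_to_inr (hG : G.Connected) {x y : V ⊕ (Σ v, W v)} (q : (corona G H).Walk x y) :
    ∀ (b : V) (w : W b), y = inr ⟨b, w⟩ → x ≠ y → G.dist (p x) b + 1 ≤ q.length := by
  induction q with
  | nil => intro b w hy hx; exact absurd rfl hx
  | @cons u₁ u₂ u₃ h q ih =>
    intro b w hy hx
    subst hy
    rw [Walk.length_cons]
    by_cases h2 : u₂ = inr ⟨b, w⟩
    · have hp : p u₁ = b := by
        subst h2; exact proj_eq_of_adj_inr G H h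
      rw [hp, SimpleGraph.dist_self]
      omega
    · have hih := ih b w rfl h2
      have htri : G.dist (p u₁) b ≤ G.dist (p u₂) b + 1 := by
        rcases proj_adj G H h with he | ha
        · rw [he]; omega
        · have h1 : G.dist (p u₁) (p u₂) ≤ 1 := by
            simpa using SimpleGraph.dist_le (Walk.cons ha Walk.nil)
          have h2 := hG.dist_triangle (u := p u₁) (v := p u₂) (w := b)
          omega
      omega

lemma len_inr_inr (hG : G.Connected) {x y : V ⊕ (Σ v, W v)} (q : (corona G H).Walk x y) :
    ∀ (s t : Σ v, W v), x = inr s → y = inr t → s.1 ≠ t.1 →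
      G.dist s.1 t.1 + 2 ≤ q.length := by
  induction q with
  | nil =>
    intro s t hx hy hst
    subst hx
    simp only [inr.injEq] at hy
    subst hy
    exact absurd rfl hst
  | @cons u₁ u₂ u₃ h q ih =>
    intro s t hx hy hst
    subst hx; subst hy
    rw [Walk.length_cons]
    cases u₂ with
    | inl c =>
      have hc : c = s.1 := proj_eq_of_adj_inr G H h.symm
      have hq := len_to_inr G H hG q t.1 t.2 rfl (by simp)
      have heq : G.dist s.fst t.fst = G.dist (p (W := W) (inl c)) t.fst := by
        show G.dist s.fst t.fst = G.dist c t.fst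
        rw [hc]
      omega
    | inr s' =>
      have hs : s.1 = s'.1 := proj_eq_of_adj_inr G H h
      have hq := ih s' t rfl rfl (by rw [← hs]; exact hst)
      rw [← hs] at hq
      omega

lemma dist_inl_inr (hG : G.Connected) (a b : V) (w : W b) :
    (corona G H).dist (inl a) (inr ⟨b, w⟩) = G.dist a b + 1 := by
  refine le_antisymm ?_ ?_
  · obtain ⟨r, hr⟩ := hG.exists_walk_length_eq_dist a b
    have := SimpleGraph.dist_le ((r.map (homInl G H)).concat (adj_inl_inr G H b w))
    erw [Walk.length_concat, Walk.length_map, hr] at this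
    exact this
  · obtain ⟨q, hq⟩ :=
      ((corona_connected G H hG) (inl a) (inr ⟨b, w⟩)).exists_walk_length_eq_dist
    have := len_to_inr G H hG q b w rfl (by simp)
    rw [hq] at this
    exact this

lemma dist_inr_inl (hG : G.Connected) (a b : V) (w : W b) :
    (corona G H).dist (inr ⟨b, w⟩) (inl a) = G.dist a b + 1 := by
  rw [SimpleGraph.dist_comm]
  exact dist_inl_inr G H hG a b w

lemma dist_inr_inr (hG : G.Connected) {a b : V} (hab : a ≠ b) (x : W a) (w : W b) :
    (corona G H).dist (inr ⟨a, x⟩) (inr ⟨b, w⟩) = G.dist a b + 2 := by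
  refine le_antisymm ?_ ?_
  · obtain ⟨r, hr⟩ := hG.exists_walk_length_eq_dist a b
    have := SimpleGraph.dist_le
      (Walk.cons (adj_inl_inr G H a x).symm ((r.map (homInl G H)).concat (adj_inl_inr G H b w)))
    erw [Walk.length_cons, Walk.length_concat, Walk.length_map, hr] at this
    exact le_trans this (by omega)
  · obtain ⟨q, hq⟩ :=
      ((corona_connected G H hG) (inr ⟨a, x⟩) (inr ⟨b, w⟩)).exists_walk_length_eq_dist
    have := len_inr_inr G H hG q ⟨a, x⟩ ⟨b, w⟩ rfl rfl hab
    rw [hq] at this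
    exact this

lemma dist_inr_same (hG : G.Connected) {a : V} (hHa : (H a).Connected) (x w : W a) :
    (corona G H).dist (inr ⟨a, x⟩) (inr ⟨a, w⟩) = min ((H a).dist x w) 2 := by
  by_cases hxw : x = w
  · subst hxw; simp [SimpleGraph.dist_self]
  by_cases hadj : (H a).Adj x w
  · rw [SimpleGraph.dist_eq_one_iff_adj.mpr ((adj_inr_same G H).mpr hadj),
      SimpleGraph.dist_eq_one_iff_adj.mpr hadj]
    omega
  · have hne : (inr ⟨a, x⟩ : V ⊕ (Σ v, W v)) ≠ inr ⟨a, w⟩ := by simpa using hxw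
    have hle : (corona G H).dist (inr ⟨a, x⟩) (inr ⟨a, w⟩) ≤ 2 := by
      simpa using SimpleGraph.dist_le
        (Walk.cons (adj_inl_inr G H a x).symm (Walk.cons (adj_inl_inr G H a w) Walk.nil))
    have h0 : (corona G H).dist (inr ⟨a, x⟩) (inr ⟨a, w⟩) ≠ 0 := by
      have := ((corona_connected G H hG).dist_eq_zero_iff
        (u := (inr ⟨a, x⟩ : V ⊕ (Σ v, W v))) (v := inr ⟨a, w⟩))
      intro hh; exact hne (this.mp hh)
    have h1 : (corona G H).dist (inr ⟨a, x⟩) (inr ⟨a, w⟩) ≠ 1 := by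
      intro hh
      exact hadj ((adj_inr_same G H).mp (SimpleGraph.dist_eq_one_iff_adj.mp hh))
    have hH0 : (H a).dist x w ≠ 0 := fun hh => hxw (hHa.dist_eq_zero_iff.mp hh)
    have hH1 : (H a).dist x w ≠ 1 := fun hh => hadj (SimpleGraph.dist_eq_one_iff_adj.mp hh)
    have : min ((H a).dist x w) 2 = 2 := by omega
    omega

lemma distinguisher (hG : G.Connected) (a : V) (x y : W a) {t : V ⊕ (Σ v, W v)}
    (hd : (corona G H).dist (inr ⟨a, x⟩) t ≠ (corona G H).dist (inr ⟨a, y⟩) t) :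
    ∃ w : W a, t = inr ⟨a, w⟩ := by
  cases t with
  | inl b =>
    exfalso
    apply hd
    rw [dist_inr_inl G H hG b a x, dist_inr_inl G H hG b a y]
  | inr s =>
    obtain ⟨b, w⟩ := s
    by_cases hb : a = b
    · subst hb; exact ⟨w, rfl⟩
    · exfalso
      apply hd
      rw [dist_inr_inr G H hG hb x w, dist_inr_inr G H hG hb y w]

end CoronaAux

open CoronaAux Sum

/-- bounds for the `k`-metric dimension of a corona product:
`Σ dim_k(H_i) ≤ dim_k(G ⊙ 𝓗) ≤ Σ |V(H_i)|` for every `k ∈ {1, …, k'}`. -/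
theorem stmt_15 {V : Type*} [Fintype V] (hn : 2 ≤ Fintype.card V) {W : V → Type*}
    [∀ v, Fintype (W v)] [∀ v, Nontrivial (W v)] (G : SimpleGraph V) (hG : G.Connected)
    (H : ∀ v, SimpleGraph (W v)) (hH : ∀ v, (H v).Connected) (k' k : ℕ)
    (hdim : kMetricDimensional (corona G H) k') (hk1 : 1 ≤ k) (hk : k ≤ k') :
    (∑ v, kMetricDim (H v) k) ≤ kMetricDim (corona G H) k ∧
      kMetricDim (corona G H) k ≤ ∑ v, Fintype.card (W v) := by
  classical
  -- the set of all "copy" vertices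
  let Sfin : Finset (V ⊕ (Σ v, W v)) :=
    Finset.univ.map ⟨Sum.inr, Sum.inr_injective⟩
  -- the copy of vertex c
  let copyT : V → Finset (V ⊕ (Σ v, W v)) := fun c =>
    Finset.univ.map ⟨fun w => Sum.inr ⟨c, w⟩, fun w1 w2 h => by simpa using h⟩
  have hcopy_mem : ∀ (c : V) (t : V ⊕ (Σ v, W v)), t ∈ copyT c ↔ ∃ w : W c, t = inr ⟨c, w⟩ := by
    intro c t
    simp [copyT, eq_comm]
    exact Iff.rfl
  have hcopy_sub : ∀ c : V, ↑(copyT c) ⊆ (↑Sfin : Set (V ⊕ (Σ v, W v))) := by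
    intro c t ht
    obtain ⟨w, rfl⟩ := (hcopy_mem c t).mp ht
    simp [Sfin]
  have hcopy_card : ∀ c : V, (copyT c).card = Fintype.card (W c) := by
    intro c; simp [copyT]
  -- Claim A : k' ≤ |W c| for every c
  have hWc : ∀ c : V, k' ≤ Fintype.card (W c) := by
    intro c
    obtain ⟨x, y, hxy⟩ := exists_pair_ne (W c)
    obtain ⟨S₀, hS₀⟩ := hdim.1
    obtain ⟨T, hT1, hT2, hT3⟩ := hS₀ (inr ⟨c, x⟩) (inr ⟨c, y⟩) (by simpa using hxy)
    have hsub : T ⊆ copyT c := by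
      intro t ht
      obtain ⟨w, hw⟩ := distinguisher G H hG c x y (hT3 t ht)
      exact (hcopy_mem c t).mpr ⟨w, hw⟩
    calc k' ≤ T.card := hT2
      _ ≤ (copyT c).card := Finset.card_le_card hsub
      _ = Fintype.card (W c) := hcopy_card c
  -- mixed pairs
  have hmix : ∀ (a : V) (s : Σ v, W v), ∃ T : Finset (V ⊕ (Σ v, W v)),
      ↑T ⊆ (↑Sfin : Set (V ⊕ (Σ v, W v))) ∧ k ≤ T.card ∧
      ∀ t ∈ T, (corona G H).dist (inl a) t ≠ (corona G H).dist (inr s) t := by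
    intro a s
    obtain ⟨b, y⟩ := s
    by_cases hab : a = b
    · subst hab
      have : Nontrivial V := Fintype.one_lt_card_iff_nontrivial.mp (by omega)
      obtain ⟨c, hc⟩ := exists_ne a
      refine ⟨copyT c, hcopy_sub c, ?_, ?_⟩
      · rw [hcopy_card c]; exact hk.trans (hWc c)
      · intro t ht
        obtain ⟨w, rfl⟩ := (hcopy_mem c t).mp ht
        rw [dist_inl_inr G H hG a c w, dist_inr_inr G H hG (fun h => hc (h.symm)) y w]
        omega
    · refine ⟨copyT a, hcopy_sub a, ?_, ?_⟩
      · rw [hcopy_card a]; exact hk.trans (hWc a)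
      · intro t ht
        obtain ⟨w, rfl⟩ := (hcopy_mem a t).mp ht
        rw [dist_inl_inr G H hG a a w, dist_inr_inr G H hG (Ne.symm hab) y w,
          SimpleGraph.dist_self]
        have : 1 ≤ G.dist b a := hG.pos_dist_of_ne (Ne.symm hab)
        omega
  -- the inr set is a k-metric generator
  have hgen : kMetricGen (corona G H) k ↑Sfin := by
    intro u v huv
    cases u with
    | inl a =>
      cases v with
      | inl b =>
        have hab : a ≠ b := by simpa using huv
        refine ⟨copyT a, hcopy_sub a, ?_, ?_⟩
        · rw [hcopy_card a]; exact hk.trans (hWc a)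
        · intro t ht
          obtain ⟨w, rfl⟩ := (hcopy_mem a t).mp ht
          rw [dist_inl_inr G H hG a a w, dist_inl_inr G H hG b a w, SimpleGraph.dist_self]
          have : 1 ≤ G.dist b a := hG.pos_dist_of_ne (Ne.symm hab)
          omega
      | inr s => exact hmix a s
    | inr s =>
      cases v with
      | inl b =>
        obtain ⟨T, h1, h2, h3⟩ := hmix b s
        exact ⟨T, h1, h2, fun t ht => (h3 t ht).symm⟩
      | inr t =>
        obtain ⟨a, x⟩ := s
        obtain ⟨b, y⟩ := t
        by_cases hab : a = b
        · subst hab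
          obtain ⟨S₀, hS₀⟩ := hdim.1
          obtain ⟨T, hT1, hT2, hT3⟩ := hS₀ _ _ huv
          refine ⟨T, ?_, hk.trans hT2, hT3⟩
          intro z hz
          obtain ⟨w, rfl⟩ := distinguisher G H hG a x y (hT3 z hz)
          simp [Sfin]
        · refine ⟨copyT a, hcopy_sub a, ?_, ?_⟩
          · rw [hcopy_card a]; exact hk.trans (hWc a)
          · intro t ht
            obtain ⟨w, rfl⟩ := (hcopy_mem a t).mp ht
            rw [dist_inr_inr G H hG (Ne.symm hab) y w]
            have hle : (corona G H).dist (inr ⟨a, x⟩) (inr ⟨a, w⟩) ≤ 2 := by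
              rw [dist_inr_same G H hG (hH a) x w]
              exact min_le_right _ _
            have : 1 ≤ G.dist b a := hG.pos_dist_of_ne (Ne.symm hab)
            omega
  constructor
  · -- lower bound
    have hne_set : {m | ∃ S : Finset (V ⊕ (Σ v, W v)),
        kMetricGen (corona G H) k ↑S ∧ S.card = m}.Nonempty := ⟨Sfin.card, Sfin, hgen, rfl⟩
    obtain ⟨B, hBgen, hBcard⟩ := Nat.sInf_mem hne_set
    let Bv : ∀ v : V, Finset (W v) := fun v =>
      Finset.univ.filter (fun w => Sum.inr ⟨v, w⟩ ∈ B)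
    have hBvgen : ∀ v : V, kMetricGen (H v) k ↑(Bv v) := by
      intro v x y hxy
      obtain ⟨T, hT1, hT2, hT3⟩ := hBgen (inr ⟨v, x⟩) (inr ⟨v, y⟩) (by simpa using hxy)
      refine ⟨Finset.univ.filter (fun w => Sum.inr ⟨v, w⟩ ∈ T), ?_, ?_, ?_⟩
      · intro w hw
        simp only [Finset.coe_filter, Set.mem_setOf_eq] at hw
        have : Sum.inr ⟨v, w⟩ ∈ B := hT1 (Finset.mem_coe.mpr hw.2)
        simp [Bv, this]
      · have hsub : T ⊆ (Finset.univ.filter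
            (fun w => Sum.inr ⟨v, w⟩ ∈ T)).image (fun w => Sum.inr ⟨v, w⟩) := by
          intro t ht
          obtain ⟨w, rfl⟩ := distinguisher G H hG v x y (hT3 t ht)
          exact Finset.mem_image.mpr ⟨w, by simp [ht], rfl⟩
        calc k ≤ T.card := hT2
          _ ≤ _ := Finset.card_le_card hsub
          _ ≤ _ := Finset.card_image_le
      · intro w hw
        simp only [Finset.mem_filter] at hw
        have hd := hT3 _ hw.2
        rw [dist_inr_same G H hG (hH v) x w, dist_inr_same G H hG (hH v) y w] at hd
        exact fun h => hd (by rw [h])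
    have hdimle : ∀ v : V, kMetricDim (H v) k ≤ (Bv v).card :=
      fun v => Nat.sInf_le ⟨Bv v, hBvgen v, rfl⟩
    have hsum : ∑ v, (Bv v).card ≤ B.card := by
      rw [← Finset.card_sigma]
      apply Finset.card_le_card_of_injOn (fun s => Sum.inr s)
      · intro s hs
        have := (Finset.mem_sigma.mp hs).2
        simp only [Bv, Finset.mem_filter] at this
        exact this.2
      · exact fun a _ b _ h => Sum.inr_injective h
    calc ∑ v, kMetricDim (H v) k ≤ ∑ v, (Bv v).card := Finset.sum_le_sum (fun v _ => hdimle v)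
      _ ≤ B.card := hsum
      _ = kMetricDim (corona G H) k := hBcard
  · -- upper bound
    have h1 : kMetricDim (corona G H) k ≤ Sfin.card := Nat.sInf_le ⟨Sfin, hgen, rfl⟩
    have h2 : Sfin.card = ∑ v, Fintype.card (W v) := by
      simp [Sfin, Fintype.card_sigma]
    omega
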